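/- Let L be a Lie algebra over a commutative ring K and let a, b ∈ L. For every natural number n there exists u ∈ L such that ⁅(ad a)^{2n} b, b⁆ + ⁅u, a⁆ = 0; that is, ⁅(ad a)^{2n} b, b⁆ lies in the image of the map x ↦ ⁅x, a⁆. -/
import Mathlib


theorem even_ad_self_bracket {K L : Type*} [CommRing K] [LieRing L] [LieAlgebra K L]
    (a b : L) (n : ℕ) :
    ∃ u : L, ⁅(fun x : L => ⁅x, a⁆)^[2 * n] b, b⁆ + ⁅u, a⁆ = 0 := by
  set f : L → L := fun x : L => ⁅x, a⁆ with hf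
  have key : ∀ x y : L, ⁅f x, y⁆ = ⁅⁅x, y⁆, a⁆ - ⁅x, f y⁆ := by
    intro x y
    show ⁅⁅x, a⁆, y⁆ = ⁅⁅x, y⁆, a⁆ - ⁅x, ⁅y, a⁆⁆
    rw [lie_lie, ← lie_skew a ⁅x, y⁆, ← lie_skew a y, lie_neg]
    abel
  have main : ∀ j, j ≤ n → ∃ u : L,
      ⁅f^[2*n] b, b⁆ = ((-1:ℤ))^j • ⁅f^[2*n - j] b, f^[j] b⁆ + ⁅u, a⁆ := by
    intro j
    induction j with
    | zero => exact fun _ => ⟨0, by simp⟩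
    | succ j ih =>
      intro hj
      obtain ⟨u, hu⟩ := ih (Nat.le_of_succ_le hj)
      have h1 : 2 * n - j = (2 * n - (j+1)) + 1 := by omega
      refine ⟨u + ((-1):ℤ)^j • ⁅f^[2*n-(j+1)] b, f^[j] b⁆, ?_⟩
      rw [hu, h1, Function.iterate_succ_apply', key,
          ← Function.iterate_succ_apply' f j b]
      rw [add_lie, smul_lie, pow_succ]
      simp only [smul_sub, mul_comm, mul_smul, neg_one_zsmul]
      abel
  obtain ⟨u, hu⟩ := main n le_rfl
  refine ⟨-u, ?_⟩
  have : 2 * n - n = n := by omega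
  rw [hu, this, lie_self, smul_zero, zero_add, neg_lie, add_neg_cancel]
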